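/- Suppose 𝒦(Σ) + 𝒴 = ℝ^s. Then X(F) = X_n(F), i.e., the feasible set X(F) is finitely determined: a state admitting a constrained trajectory of length n admits an infinite constrained trajectory. -/
import Mathlib


open Pointwise

/-- `ℓ`-fold iterate of a set-valued map: `SIter F ℓ x = F^ℓ(x)`. -/
def SIter {E : Type*} (F : E → Set E) : ℕ → E → Set E
  | 0, x => {x}
  | n + 1, x => ⋃ y ∈ SIter F n x, F y

/-- `X(F)`: initial states of infinite solutions of `x_{k+1} ∈ F(x_k)`. -/
def XSet {E : Type*} (F : E → Set E) : Set E :=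
  {x | ∃ f : ℕ → E, f 0 = x ∧ ∀ k, f (k + 1) ∈ F (f k)}

/-- `R(F) = ⋃_{ℓ ≥ 1} F^ℓ(0)`. -/
def RSet {E : Type*} [Zero E] (F : E → Set E) : Set E :=
  ⋃ ℓ ∈ {ℓ : ℕ | 1 ≤ ℓ}, SIter F ℓ 0

/-- The set-valued map `F(x) = Ax + B D^{-1}(𝒴 − Cx)` of the constrained system `(Σ,𝒴)`. -/
def Fmap {n m s : ℕ} (A : Matrix (Fin n) (Fin n) ℝ) (B : Matrix (Fin n) (Fin m) ℝ)
    (C : Matrix (Fin s) (Fin n) ℝ) (D : Matrix (Fin s) (Fin m) ℝ)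
    (Y : Set (Fin s → ℝ)) : (Fin n → ℝ) → Set (Fin n → ℝ) :=
  fun x => {z | ∃ u : Fin m → ℝ, C.mulVec x + D.mulVec u ∈ Y ∧ z = A.mulVec x + B.mulVec u}

/-- The strongly reachable subspace `𝒯*(Σ)`: states reachable from `0` with the output
kept identically zero along the way. -/
def Tstar {n m s : ℕ} (A : Matrix (Fin n) (Fin n) ℝ) (B : Matrix (Fin n) (Fin m) ℝ)
    (C : Matrix (Fin s) (Fin n) ℝ) (D : Matrix (Fin s) (Fin m) ℝ) : Set (Fin n → ℝ) :=
  RSet (Fmap A B C D ({0} : Set (Fin s → ℝ)))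

/-- The weakly unobservable subspace `𝒱*(Σ)`: initial states for which an input exists
making the output identically zero. -/
def Vstar {n m s : ℕ} (A : Matrix (Fin n) (Fin n) ℝ) (B : Matrix (Fin n) (Fin m) ℝ)
    (C : Matrix (Fin s) (Fin n) ℝ) (D : Matrix (Fin s) (Fin m) ℝ) : Set (Fin n → ℝ) :=
  XSet (Fmap A B C D ({0} : Set (Fin s → ℝ)))

/-- `𝒦(Σ) = im D + C 𝒯*(Σ)`. -/
def Kset {n m s : ℕ} (A : Matrix (Fin n) (Fin n) ℝ) (B : Matrix (Fin n) (Fin m) ℝ)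
    (C : Matrix (Fin s) (Fin n) ℝ) (D : Matrix (Fin s) (Fin m) ℝ) : Set (Fin s → ℝ) :=
  {y | ∃ (u : Fin m → ℝ) (t : Fin n → ℝ), t ∈ Tstar A B C D ∧ y = D.mulVec u + C.mulVec t}

/-- The image `im [C D]`. -/
def CDrange {n m s : ℕ} (C : Matrix (Fin s) (Fin n) ℝ) (D : Matrix (Fin s) (Fin m) ℝ) :
    Set (Fin s → ℝ) :=
  Set.range (fun p : (Fin n → ℝ) × (Fin m → ℝ) => C.mulVec p.1 + D.mulVec p.2)

lemma mem_siter_iff {E : Type*} (F : E → Set E) :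
    ∀ (ℓ : ℕ) (x z : E), z ∈ SIter F ℓ x ↔
      ∃ g : ℕ → E, g 0 = x ∧ g ℓ = z ∧ ∀ k < ℓ, g (k + 1) ∈ F (g k) := by
  intro ℓ
  induction ℓ with
  | zero =>
    intro x z
    simp only [SIter, Set.mem_singleton_iff]
    constructor
    · rintro rfl
      exact ⟨fun _ => z, rfl, rfl, fun k hk => absurd hk (Nat.not_lt_zero k)⟩
    · rintro ⟨g, h0, hz, -⟩
      rw [← hz, h0]
  | succ ℓ ih =>
    intro x z
    simp only [SIter, Set.mem_iUnion]
    constructor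
    · rintro ⟨y, hy, hzF⟩
      obtain ⟨g, h0, hℓ, hstep⟩ := (ih x y).1 hy
      refine ⟨Function.update g (ℓ + 1) z, ?_, ?_, ?_⟩
      · rw [Function.update_of_ne (by omega) _ _, h0]
      · simp [Function.update_self]
      · intro k hk
        have hk' : k ≠ ℓ + 1 := by omega
        rw [Function.update_of_ne hk']
        rcases Nat.lt_or_ge k ℓ with h | h
        · rw [Function.update_of_ne (by omega)]
          exact hstep k h
        · have : k = ℓ := by omega
          subst this
          rw [Function.update_self, hℓ]
          exact hzF
    · rintro ⟨g, h0, hℓ, hstep⟩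
      exact ⟨g ℓ, (ih x (g ℓ)).2 ⟨g, h0, rfl, fun k hk => hstep k (by omega)⟩,
        hℓ ▸ hstep ℓ (Nat.lt_succ_self ℓ)⟩

section Tsub

variable {n m s : ℕ} (A : Matrix (Fin n) (Fin n) ℝ) (B : Matrix (Fin n) (Fin m) ℝ)
    (C : Matrix (Fin s) (Fin n) ℝ) (D : Matrix (Fin s) (Fin m) ℝ)

/-- One-step strongly-reachable-subspace operator. -/
noncomputable def PhiS (S : Submodule ℝ (Fin n → ℝ)) : Submodule ℝ (Fin n → ℝ) :=
  Submodule.map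
    (A.mulVecLin.comp (LinearMap.fst ℝ (Fin n → ℝ) (Fin m → ℝ)) +
      B.mulVecLin.comp (LinearMap.snd ℝ (Fin n → ℝ) (Fin m → ℝ)))
    ((S.prod ⊤) ⊓ LinearMap.ker
      (C.mulVecLin.comp (LinearMap.fst ℝ (Fin n → ℝ) (Fin m → ℝ)) +
        D.mulVecLin.comp (LinearMap.snd ℝ (Fin n → ℝ) (Fin m → ℝ))))

lemma mem_PhiS {S : Submodule ℝ (Fin n → ℝ)} {z : Fin n → ℝ} :
    z ∈ PhiS A B C D S ↔
      ∃ (v : Fin n → ℝ) (u : Fin m → ℝ), v ∈ S ∧ C.mulVec v + D.mulVec u = 0 ∧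
        z = A.mulVec v + B.mulVec u := by
  constructor
  · intro hz
    obtain ⟨⟨v, u⟩, hmem, hz⟩ := Submodule.mem_map.1 hz
    obtain ⟨hpr, hker⟩ := Submodule.mem_inf.1 hmem
    refine ⟨v, u, (Submodule.mem_prod.1 hpr).1, ?_, ?_⟩
    · simpa using LinearMap.mem_ker.1 hker
    · simpa using hz.symm
  · rintro ⟨v, u, hv, hker, hz⟩
    refine Submodule.mem_map.2 ⟨⟨v, u⟩, Submodule.mem_inf.2
      ⟨Submodule.mem_prod.2 ⟨hv, trivial⟩, LinearMap.mem_ker.2 (by simpa using hker)⟩,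
      by simpa using hz.symm⟩

lemma PhiS_mono {S S' : Submodule ℝ (Fin n → ℝ)} (h : S ≤ S') :
    PhiS A B C D S ≤ PhiS A B C D S' :=
  Submodule.map_mono (inf_le_inf_right _ (Submodule.prod_mono h le_rfl))

/-- The chain `𝒯_ℓ` of `ℓ`-step strongly reachable subspaces. -/
noncomputable def Tsub : ℕ → Submodule ℝ (Fin n → ℝ)
  | 0 => ⊥
  | ℓ + 1 => PhiS A B C D (Tsub ℓ)

lemma siter_F0_eq : ∀ ℓ : ℕ,
    SIter (Fmap A B C D ({0} : Set (Fin s → ℝ))) ℓ 0 = ↑(Tsub A B C D ℓ) := by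
  intro ℓ
  induction ℓ with
  | zero => simp [SIter, Tsub]
  | succ ℓ ih =>
    show (⋃ y ∈ SIter (Fmap A B C D {0}) ℓ 0, Fmap A B C D {0} y) = _
    rw [ih, show Tsub A B C D (ℓ + 1) = PhiS A B C D (Tsub A B C D ℓ) from rfl]
    ext z
    simp only [Set.mem_iUnion, SetLike.mem_coe, mem_PhiS, Fmap, Set.mem_setOf_eq,
      Set.mem_singleton_iff]
    constructor
    · rintro ⟨v, hv, u, hu0, hz⟩
      exact ⟨v, u, hv, by simpa using hu0, hz⟩
    · rintro ⟨v, u, hv, hker, hz⟩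
      exact ⟨v, hv, u, by simpa using hker, hz⟩

lemma Tsub_mono : ∀ ℓ : ℕ, Tsub A B C D ℓ ≤ Tsub A B C D (ℓ + 1) := by
  intro ℓ
  induction ℓ with
  | zero => exact bot_le
  | succ ℓ ih => exact PhiS_mono A B C D ih

lemma Tsub_le_of_le {a b : ℕ} (h : a ≤ b) : Tsub A B C D a ≤ Tsub A B C D b := by
  induction b with
  | zero => simpa [Nat.le_zero.1 h] using le_rfl
  | succ b ih =>
    rcases Nat.lt_or_ge a (b + 1) with h' | h'
    · exact (ih (by omega)).trans (Tsub_mono A B C D b)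
    · have : a = b + 1 := by omega
      subst this; exact le_rfl

lemma Tsub_stab_of_eq {k : ℕ} (h : Tsub A B C D k = Tsub A B C D (k + 1)) :
    ∀ j, Tsub A B C D (k + j) = Tsub A B C D k := by
  intro j
  induction j with
  | zero => rfl
  | succ j ih =>
    show PhiS A B C D (Tsub A B C D (k + j)) = _
    rw [ih]
    exact h.symm

lemma Tsub_stab : ∀ ℓ, n ≤ ℓ → Tsub A B C D ℓ = Tsub A B C D n := by
  have key : ∃ k ≤ n, Tsub A B C D k = Tsub A B C D (k + 1) := by
    by_contra hc
    push_neg at hc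
    have hlt : ∀ k ≤ n, k ≤ Module.finrank ℝ (Tsub A B C D k) := by
      intro k hk
      induction k with
      | zero => exact Nat.zero_le _
      | succ k ih =>
        have h1 : Tsub A B C D k < Tsub A B C D (k + 1) :=
          lt_of_le_of_ne (Tsub_mono A B C D k) (hc k (by omega))
        have := Submodule.finrank_lt_finrank_of_lt h1
        have := ih (by omega)
        omega
    have h1 := hlt n le_rfl
    have h2 : Module.finrank ℝ (Tsub A B C D n) ≤ Module.finrank ℝ (Fin n → ℝ) :=
      Submodule.finrank_le _
    rw [Module.finrank_fin_fun] at h2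
    have hn : Module.finrank ℝ (Tsub A B C D n) = n := le_antisymm h2 h1
    have htop : Tsub A B C D n = ⊤ :=
      Submodule.eq_top_of_finrank_eq (by rw [hn, Module.finrank_fin_fun])
    have : Tsub A B C D (n + 1) = ⊤ :=
      top_le_iff.1 (htop ▸ Tsub_mono A B C D n)
    exact hc n le_rfl (htop.trans this.symm)
  obtain ⟨k, hk, heq⟩ := key
  intro ℓ hℓ
  have h1 := Tsub_stab_of_eq A B C D heq (ℓ - k)
  have h2 := Tsub_stab_of_eq A B C D heq (n - k)
  rw [Nat.add_sub_cancel' (hk.trans hℓ)] at h1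
  rw [Nat.add_sub_cancel' hk] at h2
  rw [h1, h2]

lemma Tstar_subset_Tsub : Tstar A B C D ⊆ ↑(Tsub A B C D n) := by
  intro t ht
  simp only [Tstar, RSet, Set.mem_iUnion, Set.mem_setOf_eq] at ht
  obtain ⟨ℓ, -, hℓ⟩ := ht
  rw [siter_F0_eq] at hℓ
  rcases Nat.lt_or_ge ℓ n with h | h
  · exact Tsub_le_of_le A B C D (le_of_lt h) hℓ
  · rw [← Tsub_stab A B C D ℓ h]
    exact hℓ

end Tsub

/-- If `𝒦(Σ) + 𝒴 = ℝ^s`, then `X(F) = X_n(F)`: the feasible set is finitely determined. -/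
theorem stmt12 {n m s : ℕ} (A : Matrix (Fin n) (Fin n) ℝ) (B : Matrix (Fin n) (Fin m) ℝ)
    (C : Matrix (Fin s) (Fin n) ℝ) (D : Matrix (Fin s) (Fin m) ℝ)
    (Y : Set (Fin s → ℝ)) (hY : Convex ℝ Y) (h0Y : (0 : Fin s → ℝ) ∈ Y)
    (hsolid : (interior (Y ∩ CDrange C D)).Nonempty)
    (hK : Kset A B C D + Y = Set.univ) :
    XSet (Fmap A B C D Y) = {x | (SIter (Fmap A B C D Y) n x).Nonempty} := by
  set F := Fmap A B C D Y with hF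
  ext x
  simp only [XSet, Set.mem_setOf_eq]
  constructor
  · rintro ⟨f, hf0, hf⟩
    exact ⟨f n, (mem_siter_iff F n x (f n)).2 ⟨f, hf0, rfl, fun k _ => hf k⟩⟩
  · intro hx
    have key : ∀ y, (SIter F n y).Nonempty → ∃ z, z ∈ F y ∧ (SIter F n z).Nonempty := by
      intro y hy
      obtain ⟨z₀, hz₀⟩ := hy
      obtain ⟨g, hg0, hgn, hgstep⟩ := (mem_siter_iff F n y z₀).1 hz₀
      have hmem : C.mulVec (g n) ∈ Kset A B C D + Y := by rw [hK]; exact Set.mem_univ _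
      obtain ⟨k0, hk0, y', hy', hsum⟩ := Set.mem_add.1 hmem
      obtain ⟨u', t, htT, hkeq⟩ := hk0
      have htn : t ∈ Tsub A B C D n := Tstar_subset_Tsub A B C D htT
      have hnt' : -t ∈ SIter (Fmap A B C D ({0} : Set (Fin s → ℝ))) n 0 := by
        rw [siter_F0_eq]
        exact neg_mem htn
      obtain ⟨h, hh0, hhn, hhstep⟩ := (mem_siter_iff _ n 0 (-t)).1 hnt'
      set e : Fin n → ℝ := g n + h n with he
      set znew : Fin n → ℝ := A.mulVec e + B.mulVec (-u') with hz
      set q : ℕ → Fin n → ℝ := fun j => if j ≤ n then g j + h j else znew with hq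
      have hq0 : q 0 = y := by simp [hq, hg0, hh0]
      have hstep : ∀ k < n + 1, q (k + 1) ∈ F (q k) := by
        intro k hk
        rcases Nat.lt_or_ge k n with hkn | hkn
        · have e1 : q k = g k + h k := by simp [hq, (by omega : k ≤ n)]
          have e2 : q (k + 1) = g (k + 1) + h (k + 1) := by
            simp [hq, (by omega : k + 1 ≤ n)]
          obtain ⟨u, huY, hud⟩ := hgstep k hkn
          obtain ⟨w, hw0, hwd⟩ := hhstep k hkn
          rw [Set.mem_singleton_iff] at hw0
          rw [e1, e2]
          refine ⟨u + w, ?_, ?_⟩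
          · have hcal : C.mulVec (g k + h k) + D.mulVec (u + w)
                = (C.mulVec (g k) + D.mulVec u) + (C.mulVec (h k) + D.mulVec w) := by
              rw [Matrix.mulVec_add, Matrix.mulVec_add]
              abel
            rw [hcal, hw0, add_zero]
            exact huY
          · rw [hud, hwd, Matrix.mulVec_add, Matrix.mulVec_add]
            abel
        · have hkn' : k = n := by omega
          have e1 : q k = e := by
            simp only [hq]
            rw [if_pos (by omega : k ≤ n), hkn']
          have e2 : q (k + 1) = znew := by
            simp only [hq]
            rw [if_neg (by omega : ¬ k + 1 ≤ n)]
          rw [e1, e2, hz]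
          refine ⟨-u', ?_, rfl⟩
          have hcal : C.mulVec e + D.mulVec (-u') = y' := by
            rw [he, hhn, Matrix.mulVec_add, Matrix.mulVec_neg, Matrix.mulVec_neg,
              ← hsum, hkeq]
            abel
          rw [hcal]
          exact hy'
      refine ⟨q 1, ?_, ?_⟩
      · have h1 := hstep 0 (by omega)
        rwa [hq0] at h1
      · exact ⟨q (n + 1), (mem_siter_iff F n (q 1) (q (n + 1))).2
          ⟨fun j => q (j + 1), rfl, rfl, fun k hk => hstep (k + 1) (by omega)⟩⟩
    have key' : ∀ p : {v : Fin n → ℝ // (SIter F n v).Nonempty},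
        ∃ z : {v : Fin n → ℝ // (SIter F n v).Nonempty}, (z : Fin n → ℝ) ∈ F p := by
      rintro ⟨v, hv⟩
      obtain ⟨z, hz1, hz2⟩ := key v hv
      exact ⟨⟨z, hz2⟩, hz1⟩
    choose nxt hnxt using key'
    refine ⟨fun k => ((Nat.rec ⟨x, hx⟩ (fun _ p => nxt p) k :
      {v : Fin n → ℝ // (SIter F n v).Nonempty}) : Fin n → ℝ), rfl, fun k => ?_⟩
    exact hnxt (Nat.rec ⟨x, hx⟩ (fun _ p => nxt p) k)
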